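/- Let θ_a, θ₀, θ be positive reals satisfying θ · (θ₀/θ)^{ν_f} · (θ_a/θ)^{ν_d} < 1, where ν_d, ν_f ≥ 0. Suppose a nonnegative sequence (E_k) evolves on [0, k_e] by multiplying θ_a on each of p disjoint 'attack' intervals of total length D, multiplying θ₀ at p+1 designated time-steps (one immediately following each attack interval and one at the initial step), and multiplying θ at all remaining steps, where D ≤ Π_d + ν_d k_e and p ≤ Π_f + ν_f k_e for constants Π_d, Π_f ≥ 0. Then E_{k_e} ≤ (θ₀^{Π_f+1} θ_a^{Π_d} / θ^{Π_f+Π_d+1}) · (θ (θ₀/θ)^{ν_f} (θ_a/θ)^{ν_d})^{k_e} · E_0, assuming θ₀ ≥ θ and θ_a ≥ θ. -/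

import Mathlib

/-- exponential decay of the error bound under averagely bounded
DoS duration and frequency. -/
theorem stmt_3 (θa θ₀ θ νd νf Pd Pf : ℝ)
    (hθ : 0 < θ) (hθ₀ : 0 < θ₀) (hθa : 0 < θa)
    (hθθ₀ : θ ≤ θ₀) (hθθa : θ ≤ θa)
    (hνd : 0 ≤ νd) (hνf : 0 ≤ νf) (hPd : 0 ≤ Pd) (hPf : 0 ≤ Pf)
    (hcontract : θ * (θ₀ / θ) ^ νf * (θa / θ) ^ νd < 1)
    (ke : ℕ) (E : ℕ → ℝ) (hEnonneg : ∀ k, 0 ≤ E k)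
    (A B : Finset ℕ) (hA : A ⊆ Finset.range ke) (hB : B ⊆ Finset.range ke)
    (hAB : Disjoint A B)
    (D p : ℕ) (hD : A.card = D) (hp : B.card = p + 1)
    (hDbound : (D : ℝ) ≤ Pd + νd * ke) (hpbound : (p : ℝ) ≤ Pf + νf * ke)
    (hrec : ∀ j < ke, E (j + 1) = (if j ∈ A then θa else if j ∈ B then θ₀ else θ) * E j) :
    E ke ≤ (θ₀ ^ (Pf + 1) * θa ^ Pd / θ ^ (Pf + Pd + 1))
      * (θ * (θ₀ / θ) ^ νf * (θa / θ) ^ νd) ^ (ke : ℝ) * E 0 := by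
  set f : ℕ → ℝ := fun j => if j ∈ A then θa else if j ∈ B then θ₀ else θ with hf
  -- exact expression for E ke
  have key : ∀ n, n ≤ ke → E n = (∏ j ∈ Finset.range n, f j) * E 0 := by
    intro n
    induction n with
    | zero => intro _; simp
    | succ m ih =>
      intro hn
      have hm : m < ke := hn
      rw [Finset.prod_range_succ, hrec m hm, ih (le_of_lt hm)]
      ring
  have hEke : E ke = (∏ j ∈ Finset.range ke, f j) * E 0 := key ke le_rfl
  -- compute the product
  have hABsub : A ∪ B ⊆ Finset.range ke := Finset.union_subset hA hB
  have hprodA : ∏ j ∈ A, f j = θa ^ D := by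
    rw [← hD, ← Finset.prod_const]
    exact Finset.prod_congr rfl (fun j hj => by simp [hf, hj])
  have hprodB : ∏ j ∈ B, f j = θ₀ ^ (p + 1) := by
    rw [← hp, ← Finset.prod_const]
    refine Finset.prod_congr rfl (fun j hj => ?_)
    have hjA : j ∉ A := Finset.disjoint_right.mp hAB hj
    simp [hf, hjA, hj]
  have hprodR : ∏ j ∈ Finset.range ke \ (A ∪ B), f j
      = θ ^ (ke - (D + (p + 1))) := by
    have h1 : ∏ j ∈ Finset.range ke \ (A ∪ B), f j
        = ∏ _j ∈ Finset.range ke \ (A ∪ B), θ := by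
      refine Finset.prod_congr rfl (fun j hj => ?_)
      rw [Finset.mem_sdiff, Finset.mem_union] at hj
      push_neg at hj
      simp [hf, hj.2.1, hj.2.2]
    rw [h1, Finset.prod_const, Finset.card_sdiff_of_subset hABsub,
      Finset.card_union_of_disjoint hAB, Finset.card_range, hD, hp]
  have hcard : D + (p + 1) ≤ ke := by
    have := Finset.card_le_card hABsub
    rwa [Finset.card_union_of_disjoint hAB, Finset.card_range, hD, hp] at this
  have hprod : ∏ j ∈ Finset.range ke, f j
      = θa ^ D * θ₀ ^ (p + 1) * θ ^ (ke - (D + (p + 1))) := by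
    rw [← Finset.prod_sdiff hABsub, Finset.prod_union hAB, hprodA, hprodB, hprodR]
    ring
  -- abbreviations
  set a : ℝ := θ₀ / θ with ha
  set b : ℝ := θa / θ with hb
  have ha1 : (1 : ℝ) ≤ a := (one_le_div hθ).mpr hθθ₀
  have hb1 : (1 : ℝ) ≤ b := (one_le_div hθ).mpr hθθa
  have ha0 : (0 : ℝ) ≤ a := by positivity
  have hb0 : (0 : ℝ) ≤ b := by positivity
  -- rewrite LHS coefficient with base θ
  have hLHS : θa ^ D * θ₀ ^ (p + 1) * θ ^ (ke - (D + (p + 1)))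
      = θ ^ (ke : ℝ) * a ^ ((p : ℝ) + 1) * b ^ (D : ℝ) := by
    have hθa' : θa = b * θ := by rw [hb]; field_simp
    have hθ₀' : θ₀ = a * θ := by rw [ha]; field_simp
    have e1 : θ ^ (ke : ℝ) = θ ^ ke := Real.rpow_natCast θ ke
    have e2 : a ^ ((p : ℝ) + 1) = a ^ (p + 1) := by
      rw [← Real.rpow_natCast a (p + 1)]; push_cast; ring_nf
    have e3 : b ^ (D : ℝ) = b ^ D := Real.rpow_natCast b D
    have hθsplit : θ ^ ke = θ ^ D * θ ^ (p + 1) * θ ^ (ke - (D + (p + 1))) := by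
      rw [← pow_add, ← pow_add]; congr 1; omega
    rw [e1, e2, e3, hθa', hθ₀', mul_pow, mul_pow, hθsplit]
    ring
  -- rewrite RHS coefficient with base θ
  have hRHS : (θ₀ ^ (Pf + 1) * θa ^ Pd / θ ^ (Pf + Pd + 1))
      * (θ * a ^ νf * b ^ νd) ^ (ke : ℝ)
      = θ ^ (ke : ℝ) * a ^ (Pf + 1 + νf * ke) * b ^ (Pd + νd * ke) := by
    rw [Real.mul_rpow (by positivity) (by positivity),
      Real.mul_rpow (by positivity) (by positivity),
      ← Real.rpow_mul ha0, ← Real.rpow_mul hb0]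
    have h1 : θ₀ ^ (Pf + 1) = a ^ (Pf + 1) * θ ^ (Pf + 1) := by
      rw [ha, Real.div_rpow hθ₀.le hθ.le]
      field_simp
    have h2 : θa ^ Pd = b ^ Pd * θ ^ Pd := by
      rw [hb, Real.div_rpow hθa.le hθ.le]
      field_simp
    have h3 : θ ^ (Pf + Pd + 1) = θ ^ (Pf + 1) * θ ^ Pd := by
      rw [← Real.rpow_add hθ]; ring_nf
    have h4 : a ^ (Pf + 1 + νf * ke) = a ^ (Pf + 1) * a ^ (νf * ke) :=
      Real.rpow_add (lt_of_lt_of_le one_pos ha1) _ _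
    have h5 : b ^ (Pd + νd * ke) = b ^ Pd * b ^ (νd * ke) :=
      Real.rpow_add (lt_of_lt_of_le one_pos hb1) _ _
    have hne1 : θ ^ (Pf + 1) ≠ 0 := by positivity
    have hne2 : θ ^ Pd ≠ 0 := by positivity
    rw [h1, h2, h3, h4, h5]
    field_simp
  -- the three factor inequalities
  have hfa : a ^ ((p : ℝ) + 1) ≤ a ^ (Pf + 1 + νf * ke) :=
    Real.rpow_le_rpow_of_exponent_le ha1 (by linarith)
  have hfb : b ^ (D : ℝ) ≤ b ^ (Pd + νd * ke) :=
    Real.rpow_le_rpow_of_exponent_le hb1 (by linarith)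
  have hθke : (0:ℝ) ≤ θ ^ (ke : ℝ) := Real.rpow_nonneg hθ.le _
  have hcoef : θ ^ (ke : ℝ) * a ^ ((p : ℝ) + 1) * b ^ (D : ℝ)
      ≤ θ ^ (ke : ℝ) * a ^ (Pf + 1 + νf * ke) * b ^ (Pd + νd * ke) := by
    have h1 : θ ^ (ke : ℝ) * a ^ ((p : ℝ) + 1) ≤ θ ^ (ke : ℝ) * a ^ (Pf + 1 + νf * ke) :=
      mul_le_mul_of_nonneg_left hfa hθke
    exact mul_le_mul h1 hfb (Real.rpow_nonneg hb0 _) (by positivity)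
  calc E ke = (θ ^ (ke : ℝ) * a ^ ((p : ℝ) + 1) * b ^ (D : ℝ)) * E 0 := by
        rw [hEke, hprod, hLHS]
    _ ≤ (θ ^ (ke : ℝ) * a ^ (Pf + 1 + νf * ke) * b ^ (Pd + νd * ke)) * E 0 :=
        mul_le_mul_of_nonneg_right hcoef (hEnonneg 0)
    _ = (θ₀ ^ (Pf + 1) * θa ^ Pd / θ ^ (Pf + Pd + 1))
      * (θ * a ^ νf * b ^ νd) ^ (ke : ℝ) * E 0 := by rw [hRHS]
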